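/- arXiv:1109.0326 — 2 statements merged into one kernel-verified Lean document; each statement's English description precedes it below -/
import Mathlib

section
/- Let n ≥ 1 be an odd integer. Then for every constant c ∈ ℝ, ‖p_n‖_∞ ≤ ‖p_n + c‖_∞, i.e. max_{x∈[0,1]} |B_n(x)/n!| ≤ max_{x∈[0,1]} |B_n(x)/n! + c|. -/
/-- The `n`-th Bernoulli polynomial, evaluated at a real number `x`. -/
noncomputable def bernPoly (n : ℕ) (x : ℝ) : ℝ :=
  Polynomial.aeval x (Polynomial.bernoulli n)

/-- `p_n(x) = B_n(x)/n!`. -/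
noncomputable def pB (n : ℕ) (x : ℝ) : ℝ := bernPoly n x / (n.factorial : ℝ)

/-- The sup norm `‖g‖_∞ = max_{x∈[0,1]} |g(x)|`. -/
noncomputable def normInf (g : ℝ → ℝ) : ℝ :=
  sSup ((fun x => |g x|) '' Set.Icc (0:ℝ) 1)

open Polynomial in
lemma bernoulli_comp_one_sub (n : ℕ) :
    (Polynomial.bernoulli n).comp (1 - X) = C ((-1 : ℚ) ^ n) * Polynomial.bernoulli n := by
  induction n with
  | zero => simp
  | succ n ih =>
    have hd : derivative ((Polynomial.bernoulli (n+1)).comp (1 - X)) =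
        derivative (C ((-1 : ℚ) ^ (n+1)) * Polynomial.bernoulli (n+1)) := by
      rw [derivative_comp_one_sub_X, derivative_bernoulli_add_one, derivative_mul,
        derivative_C, zero_mul, zero_add, derivative_bernoulli_add_one]
      rw [mul_comp, ih]
      simp only [Polynomial.add_comp, Polynomial.natCast_comp, Polynomial.one_comp]
      rw [pow_succ, map_mul, map_neg, map_one]
      ring
    have h0 : ((Polynomial.bernoulli (n+1)).comp (1 - X)).eval 1 =
        (C ((-1 : ℚ) ^ (n+1)) * Polynomial.bernoulli (n+1)).eval 1 := by
      simp [eval_comp, _root_.bernoulli]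
    have := Polynomial.eq_C_of_derivative_eq_zero
      (p := (Polynomial.bernoulli (n+1)).comp (1 - X)
        - C ((-1 : ℚ) ^ (n+1)) * Polynomial.bernoulli (n+1)) (by rw [derivative_sub, hd, sub_self])
    have h1 : ((Polynomial.bernoulli (n+1)).comp (1 - X)
        - C ((-1 : ℚ) ^ (n+1)) * Polynomial.bernoulli (n+1)).eval 1 = 0 := by
      rw [eval_sub, h0, sub_self]
    rw [← sub_eq_zero, this]
    rw [this, Polynomial.eval_C] at h1
    rw [h1, map_zero]

lemma pB_one_sub (n : ℕ) (hodd : Odd n) (x : ℝ) : pB n (1 - x) = - pB n x := by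
  have h := bernoulli_comp_one_sub n
  have := congrArg (Polynomial.aeval x) h
  rw [Polynomial.aeval_comp] at this
  simp only [map_sub, map_one, Polynomial.aeval_X, map_mul, Polynomial.aeval_C] at this
  have hsign : ((-1 : ℚ) ^ n : ℚ) = -1 := hodd.neg_one_pow
  rw [hsign] at this
  unfold pB bernPoly
  rw [this]
  push_cast
  ring

lemma cont_pB (n : ℕ) : Continuous (pB n) := by
  unfold pB bernPoly
  have : (fun x : ℝ => (Polynomial.aeval x) (Polynomial.bernoulli n))
      = fun x : ℝ => ((Polynomial.bernoulli n).map (algebraMap ℚ ℝ)).eval x := by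
    funext x
    rw [Polynomial.aeval_def, Polynomial.eval₂_eq_eval_map]
  have h2 : Continuous fun x : ℝ => (Polynomial.aeval x) (Polynomial.bernoulli n) := by
    rw [this]; exact Polynomial.continuous _
  exact h2.div_const _

/-- For odd `n ≥ 1` and every `c ∈ ℝ`,
`max_{x∈[0,1]} |B_n(x)/n!| ≤ max_{x∈[0,1]} |B_n(x)/n! + c|`. -/
theorem sup_norm_pB_odd_min (n : ℕ) (hn : 1 ≤ n) (hodd : Odd n) (c : ℝ) :
    normInf (pB n) ≤ normInf (fun x => pB n x + c) := by
  have hco : IsCompact (Set.Icc (0:ℝ) 1) := isCompact_Icc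
  have hne : (Set.Icc (0:ℝ) 1).Nonempty := ⟨0, by norm_num⟩
  -- max of |pB n| attained at some x0
  obtain ⟨x0, hx0, hmax⟩ := hco.exists_isMaxOn hne ((cont_pB n).abs.continuousOn)
  -- bddAbove for the shifted function
  have hg : Continuous fun x => |pB n x + c| := ((cont_pB n).add continuous_const).abs
  have hbdd : BddAbove ((fun x => |pB n x + c|) '' Set.Icc (0:ℝ) 1) :=
    (hco.image hg).bddAbove
  have hle : ∀ x ∈ Set.Icc (0:ℝ) 1, |pB n x + c| ≤ normInf (fun x => pB n x + c) := by
    intro x hx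
    exact le_csSup hbdd ⟨x, hx, rfl⟩
  have hx0' : (1 - x0) ∈ Set.Icc (0:ℝ) 1 := by
    constructor <;> [linarith [hx0.2]; linarith [hx0.1]]
  have key : |pB n x0| ≤ normInf (fun x => pB n x + c) := by
    have h1 := hle x0 hx0
    have h2 := hle (1 - x0) hx0'
    have h3 : pB n (1 - x0) = - pB n x0 := pB_one_sub n hodd x0
    rw [h3] at h2
    have : 2 * |pB n x0| ≤ 2 * normInf (fun x => pB n x + c) := by
      calc 2 * |pB n x0| = |(pB n x0 + c) - (-pB n x0 + c)| := by
              rw [show (pB n x0 + c) - (-pB n x0 + c) = 2 * pB n x0 by ring, abs_mul]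
              norm_num
        _ ≤ |pB n x0 + c| + |-pB n x0 + c| := abs_sub _ _
        _ ≤ _ := by linarith
    linarith
  have : normInf (pB n) ≤ |pB n x0| := by
    apply csSup_le (hne.image _)
    rintro y ⟨x, hx, rfl⟩
    exact hmax hx
  linarith
end

section
/- For every even integer n ≥ 2, ∫_0^1 |B_n(x) − B_n| dx = |B_n|; equivalently, ‖q_n‖_1 = |B_n|/n!. -/
open MeasureTheory intervalIntegral

/-- The `n`-th Bernoulli number `B_n = B_n(0)`, as a real number. -/
noncomputable def bernNum (n : ℕ) : ℝ := (bernoulli n : ℝ)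

lemma bernPoly_ratCast (n : ℕ) (q : ℚ) :
    bernPoly n (q : ℝ) = ((((Polynomial.bernoulli n).eval q : ℚ)) : ℝ) := by
  rw [bernPoly, show ((q : ℝ)) = algebraMap ℚ ℝ q from rfl,
    Polynomial.aeval_algebraMap_apply]
  norm_cast

lemma bernPoly_zero_eval (n : ℕ) : bernPoly n 0 = bernNum n := by
  have := bernPoly_ratCast n 0
  simpa [bernNum] using this

lemma bernPoly_one_eval (n : ℕ) (hn : n ≠ 1) : bernPoly n 1 = bernNum n := by
  have := bernPoly_ratCast n 1
  simp only [Rat.cast_one] at this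
  rw [this, Polynomial.bernoulli_eval_one, ← bernoulli_eq_bernoulli'_of_ne_one hn, bernNum]

lemma bernNum_odd (n : ℕ) (h : Odd n) (h1 : 1 < n) : bernNum n = 0 := by
  rw [bernNum, bernoulli_eq_bernoulli'_of_ne_one (by omega), bernoulli'_eq_zero_of_odd h h1]
  simp

lemma bernPoly_repr (m : ℕ) :
    bernPoly m = fun y => (((Polynomial.bernoulli m).map (algebraMap ℚ ℝ)).eval y) := by
  funext y; simp [bernPoly, Polynomial.aeval_def, Polynomial.eval_map]

lemma bernPoly_continuous (n : ℕ) : Continuous (bernPoly n) := by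
  rw [bernPoly_repr]; exact Polynomial.continuous _

lemma bernPoly_hasDerivAt (n : ℕ) (x : ℝ) :
    HasDerivAt (bernPoly (n+1)) ((n+1) * bernPoly n x) x := by
  rw [bernPoly_repr (n+1)]
  have h := Polynomial.hasDerivAt ((Polynomial.bernoulli (n+1)).map (algebraMap ℚ ℝ)) x
  have heq : Polynomial.derivative ((Polynomial.bernoulli (n+1)).map (algebraMap ℚ ℝ))
      = (((n : Polynomial ℚ) + 1) * Polynomial.bernoulli n).map (algebraMap ℚ ℝ) := by
    rw [Polynomial.derivative_map, Polynomial.derivative_bernoulli_add_one]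
  rw [heq] at h
  refine h.congr_deriv (Eq.symm ?_)
  rw [bernPoly_repr n]
  push_cast [Polynomial.map_mul]
  simp [Polynomial.eval_mul, Polynomial.map_add, Polynomial.map_one, Polynomial.map_natCast]

lemma bernPoly_one' (x : ℝ) : bernPoly 1 x = x - 1/2 := by
  simp [bernPoly, Polynomial.bernoulli, Finset.sum_range_succ]
  norm_num
  ring

lemma bernPoly_one_sub (n : ℕ) (x : ℝ) :
    bernPoly n (1 - x) = (-1)^n * bernPoly n x := by
  induction n generalizing x with
  | zero => simp [bernPoly, Polynomial.bernoulli]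
  | succ n ih =>
    have hg : ∀ y : ℝ, HasDerivAt
        (fun t => bernPoly (n+1) (1 - t) - (-1)^(n+1) * bernPoly (n+1) t) 0 y := by
      intro y
      have h1 : HasDerivAt (fun t : ℝ => 1 - t) (-1) y := by
        simpa using (hasDerivAt_id y).const_sub 1
      have h2 := (bernPoly_hasDerivAt n (1 - y)).comp y h1
      have h3 := (bernPoly_hasDerivAt n y).const_mul ((-1:ℝ)^(n+1))
      have h4 := h2.sub h3
      refine h4.congr_deriv (Eq.symm ?_)
      rw [ih y]
      ring
    have hconst := is_const_of_deriv_eq_zero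
      (fun y => (hg y).differentiableAt) (fun y => (hg y).deriv) x 0
    have h0 : bernPoly (n+1) (1 - 0) - (-1)^(n+1) * bernPoly (n+1) 0 = 0 := by
      rw [sub_zero, bernPoly_zero_eval]
      rcases Nat.even_or_odd (n+1) with he | ho
      · by_cases h : n + 1 = 1
        · exfalso; rw [h] at he; simp at he
        · rw [bernPoly_one_eval _ h, he.neg_one_pow]; ring
      · by_cases h1 : n + 1 = 1
        · rw [h1]
          simp [bernPoly_one', bernNum, bernoulli_one]
          norm_num
        · rw [bernPoly_one_eval _ h1, bernNum_odd _ ho (by omega)]; ring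
    have : bernPoly (n+1) (1 - x) - (-1)^(n+1) * bernPoly (n+1) x = 0 := by
      rw [hconst]; simpa using h0
    linarith [this]

lemma bernPoly_half (n : ℕ) (h : Odd n) : bernPoly n (1/2 : ℝ) = 0 := by
  have := bernPoly_one_sub n (1/2)
  rw [h.neg_one_pow] at this
  norm_num at this
  linarith

lemma rolle_bern (k : ℕ) {a b : ℝ} (hab : a < b)
    (h : bernPoly (k+1) a = bernPoly (k+1) b) : ∃ c ∈ Set.Ioo a b, bernPoly k c = 0 := by
  obtain ⟨c, hc, hd⟩ := exists_deriv_eq_zero hab ((bernPoly_continuous (k+1)).continuousOn) h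
  refine ⟨c, hc, ?_⟩
  rw [(bernPoly_hasDerivAt k c).deriv] at hd
  have hne : ((k:ℝ)+1) ≠ 0 := by positivity
  rcases mul_eq_zero.mp hd with h' | h'
  · exact absurd h' hne
  · exact h'

lemma bernPoly_odd_ne_zero (m : ℕ) : ∀ x : ℝ,
    ((0 < x ∧ x < 1/2) ∨ (1/2 < x ∧ x < 1)) → bernPoly (2*m+1) x ≠ 0 := by
  induction m with
  | zero =>
    intro x hx h0
    rw [show 2*0+1 = 1 from rfl, bernPoly_one' x] at h0
    rcases hx with ⟨_, h⟩ | ⟨h, _⟩ <;> linarith [sub_eq_zero.mp h0]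
  | succ m ih =>
    intro c hc hzero
    rw [show 2*(m+1)+1 = 2*m+3 from by ring] at hzero
    have hodd : Odd (2*m+3) := ⟨m+1, by ring⟩
    have h0 : bernPoly (2*m+3) 0 = 0 := by
      rw [bernPoly_zero_eval]; exact bernNum_odd _ hodd (by omega)
    have h1 : bernPoly (2*m+3) 1 = 0 := by
      rw [bernPoly_one_eval _ (by omega)]; exact bernNum_odd _ hodd (by omega)
    have hh : bernPoly (2*m+3) (1/2 : ℝ) = 0 := bernPoly_half _ hodd
    have e3 : 2*m+3 = (2*m+2)+1 := by ring
    rw [e3] at hzero h0 h1 hh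
    rcases hc with ⟨ha, hb⟩ | ⟨ha, hb⟩
    · obtain ⟨u, hu, hu0⟩ := rolle_bern (2*m+2) ha (h0.trans hzero.symm)
      obtain ⟨v, hv, hv0⟩ := rolle_bern (2*m+2) hb (hzero.trans hh.symm)
      obtain ⟨w, hw, hw0⟩ := rolle_bern (2*m+1) (hu.2.trans hv.1) (hu0.trans hv0.symm)
      exact ih w (Or.inl ⟨lt_trans hu.1 hw.1, lt_trans hw.2 hv.2⟩) hw0
    · obtain ⟨u, hu, hu0⟩ := rolle_bern (2*m+2) ha (hh.trans hzero.symm)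
      obtain ⟨v, hv, hv0⟩ := rolle_bern (2*m+2) hb (hzero.trans h1.symm)
      obtain ⟨w, hw, hw0⟩ := rolle_bern (2*m+1) (hu.2.trans hv.1) (hu0.trans hv0.symm)
      exact ih w (Or.inr ⟨lt_trans hu.1 hw.1, lt_trans hw.2 hv.2⟩) hw0

lemma integral_bernPoly (n : ℕ) (hn : 1 ≤ n) :
    (∫ x in (0:ℝ)..1, bernPoly n x) = 0 := by
  have hF : ∀ x ∈ Set.uIcc (0:ℝ) 1,
      HasDerivAt (fun x => bernPoly (n+1) x / ((n:ℝ)+1)) (bernPoly n x) x := by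
    intro x _
    have h := (bernPoly_hasDerivAt n x).div_const ((n:ℝ)+1)
    have hne : ((n:ℝ)+1) ≠ 0 := by positivity
    refine h.congr_deriv (Eq.symm ?_)
    field_simp
  have hint : IntervalIntegrable (bernPoly n) volume 0 1 :=
    (bernPoly_continuous n).intervalIntegrable 0 1
  rw [integral_eq_sub_of_hasDerivAt hF hint,
    bernPoly_one_eval (n+1) (by omega), bernPoly_zero_eval]
  ring

lemma f_no_zero (n : ℕ) (hn : 2 ≤ n) (heven : Even n) {c : ℝ} (hc0 : 0 < c) (hc1 : c < 1)
    (hz : bernPoly n c - bernNum n = 0) : False := by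
  obtain ⟨k, rfl⟩ : ∃ k, n = k + 1 := ⟨n - 1, by omega⟩
  have hk : Odd k := by
    rcases Nat.even_or_odd k with h | h
    · exfalso; exact (Nat.even_add_one.mp heven) (by simpa using h)
    · exact h
  obtain ⟨m, hm⟩ := hk
  have heq0 : bernPoly (k+1) 0 = bernPoly (k+1) c := by
    rw [bernPoly_zero_eval]; linarith [hz]
  have heq1 : bernPoly (k+1) c = bernPoly (k+1) 1 := by
    rw [bernPoly_one_eval _ (by omega)]; linarith [hz]
  obtain ⟨u, hu, hu0⟩ := rolle_bern k hc0 heq0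
  obtain ⟨v, hv, hv0⟩ := rolle_bern k hc1 heq1
  have hk2 : k = 2*m+1 := by omega
  rw [hk2] at hu0 hv0
  have hu_half : u = 1/2 := by
    by_contra h
    rcases lt_or_gt_of_ne h with h' | h'
    · exact bernPoly_odd_ne_zero m u (Or.inl ⟨hu.1, h'⟩) hu0
    · exact bernPoly_odd_ne_zero m u (Or.inr ⟨h', lt_trans hu.2 hc1⟩) hu0
  have hv_half : v = 1/2 := by
    by_contra h
    rcases lt_or_gt_of_ne h with h' | h'
    · exact bernPoly_odd_ne_zero m v (Or.inl ⟨lt_trans hc0 hv.1, h'⟩) hv0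
    · exact bernPoly_odd_ne_zero m v (Or.inr ⟨h', hv.2⟩) hv0
  have : u < v := lt_trans hu.2 hv.1
  rw [hu_half, hv_half] at this
  exact lt_irrefl _ this

/-- For every even `n ≥ 2`, `∫_0^1 |B_n(x) − B_n| dx = |B_n|`;
equivalently, `‖q_n‖_1 = |B_n|/n!` where `q_n(x) = (B_n(x) − B_n)/n!`. -/
theorem L1_norm_qB_even (n : ℕ) (hn : 2 ≤ n) (heven : Even n) :
    (∫ x in (0:ℝ)..1, |bernPoly n x - bernNum n|) = |bernNum n| ∧
      (∫ x in (0:ℝ)..1, |(bernPoly n x - bernNum n) / (n.factorial : ℝ)|) =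
        |bernNum n| / (n.factorial : ℝ) := by
  set f : ℝ → ℝ := fun x => bernPoly n x - bernNum n with hf
  have hfc : Continuous f := (bernPoly_continuous n).sub continuous_const
  have hf0 : f 0 = 0 := by simp [hf, bernPoly_zero_eval]
  have hf1 : f 1 = 0 := by simp [hf, bernPoly_one_eval n (by omega)]
  -- constant sign
  have hsign : (∀ x ∈ Set.Icc (0:ℝ) 1, 0 ≤ f x) ∨ (∀ x ∈ Set.Icc (0:ℝ) 1, f x ≤ 0) := by
    by_contra h
    push_neg at h
    obtain ⟨⟨a, ha, hfa⟩, ⟨b, hb, hfb⟩⟩ := h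
    have ha' : 0 < a ∧ a < 1 := by
      constructor
      · rcases eq_or_lt_of_le ha.1 with h' | h'
        · exfalso; rw [← h', hf0] at hfa; exact lt_irrefl _ hfa
        · exact h'
      · rcases eq_or_lt_of_le ha.2 with h' | h'
        · exfalso; rw [h', hf1] at hfa; exact lt_irrefl _ hfa
        · exact h'
    have hb' : 0 < b ∧ b < 1 := by
      constructor
      · rcases eq_or_lt_of_le hb.1 with h' | h'
        · exfalso; rw [← h', hf0] at hfb; exact lt_irrefl _ hfb
        · exact h'
      · rcases eq_or_lt_of_le hb.2 with h' | h'
        · exfalso; rw [h', hf1] at hfb; exact lt_irrefl _ hfb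
        · exact h'
    rcases le_total a b with hab | hab
    · have : (0:ℝ) ∈ Set.Icc (f a) (f b) := ⟨le_of_lt hfa, le_of_lt hfb⟩
      obtain ⟨z, hz, hfz⟩ := intermediate_value_Icc hab hfc.continuousOn this
      exact f_no_zero n hn heven (lt_of_lt_of_le ha'.1 hz.1) (lt_of_le_of_lt hz.2 hb'.2) hfz
    · have : (0:ℝ) ∈ Set.Icc (f a) (f b) := ⟨le_of_lt hfa, le_of_lt hfb⟩
      obtain ⟨z, hz, hfz⟩ := intermediate_value_Icc' hab hfc.continuousOn this
      exact f_no_zero n hn heven (lt_of_lt_of_le hb'.1 hz.1) (lt_of_le_of_lt hz.2 ha'.2) hfz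
  -- integral of f
  have hint : IntervalIntegrable f volume 0 1 := hfc.intervalIntegrable 0 1
  have hI : (∫ x in (0:ℝ)..1, f x) = - bernNum n := by
    rw [hf]
    rw [intervalIntegral.integral_sub ((bernPoly_continuous n).intervalIntegrable 0 1)
      (intervalIntegrable_const)]
    rw [integral_bernPoly n (by omega), intervalIntegral.integral_const]
    simp
  have huIcc : Set.uIcc (0:ℝ) 1 = Set.Icc 0 1 := Set.uIcc_of_le (by norm_num)
  have main : (∫ x in (0:ℝ)..1, |f x|) = |bernNum n| := by
    rcases hsign with hpos | hneg
    · have hcong : (∫ x in (0:ℝ)..1, |f x|) = ∫ x in (0:ℝ)..1, f x := by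
        apply intervalIntegral.integral_congr
        intro x hx
        rw [huIcc] at hx
        exact abs_of_nonneg (hpos x hx)
      have hInn : 0 ≤ ∫ x in (0:ℝ)..1, f x :=
        intervalIntegral.integral_nonneg (by norm_num) (fun x hx => hpos x hx)
      rw [hcong, hI]
      rw [hI] at hInn
      rw [abs_of_nonpos (by linarith)]
    · have hcong : (∫ x in (0:ℝ)..1, |f x|) = ∫ x in (0:ℝ)..1, -f x := by
        apply intervalIntegral.integral_congr
        intro x hx
        rw [huIcc] at hx
        exact abs_of_nonpos (hneg x hx)
      have hInn : 0 ≤ ∫ x in (0:ℝ)..1, -f x :=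
        intervalIntegral.integral_nonneg (by norm_num) (fun x hx => by
          simpa using hneg x hx)
      rw [intervalIntegral.integral_neg, hI] at hInn
      rw [hcong, intervalIntegral.integral_neg, hI, neg_neg, abs_of_nonneg (by linarith)]
  refine ⟨main, ?_⟩
  have : ∀ x : ℝ, |f x / (n.factorial : ℝ)| = |f x| / (n.factorial : ℝ) := by
    intro x
    rw [abs_div, abs_of_pos (by positivity : (0:ℝ) < (n.factorial : ℝ))]
  simp_rw [hf] at this ⊢
  calc (∫ x in (0:ℝ)..1, |(bernPoly n x - bernNum n) / (n.factorial : ℝ)|)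
      = ∫ x in (0:ℝ)..1, |bernPoly n x - bernNum n| / (n.factorial : ℝ) := by
        apply intervalIntegral.integral_congr; intro x _; exact this x
    _ = (∫ x in (0:ℝ)..1, |bernPoly n x - bernNum n|) / (n.factorial : ℝ) :=
        intervalIntegral.integral_div _ _
    _ = |bernNum n| / (n.factorial : ℝ) := by rw [← hf] at *; rw [main]
end
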